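/- Let k be a field, V a k-vector space, and R a k-linear endomorphism of V⊗V. Then R is a solution of the Hopf equation (R¹²R²³ = R²³R¹³R¹²) if and only if T := R∘τ satisfies the equation T²³T¹²T²³ = T¹²T¹³τ²³ in End(V⊗V⊗V), where τ : V⊗V → V⊗V is the flip map, τ²³ = I⊗τ, and T¹³ = (I⊗τ)(T⊗I)(I⊗τ). -/

import Mathlib

open TensorProduct LinearMap

section HopfEq

variable (k V : Type*) [Field k] [AddCommGroup V] [Module k V]

/-- The flip map `τ : V ⊗ V → V ⊗ V`, `τ(v ⊗ w) = w ⊗ v`. -/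
noncomputable def flipMap : V ⊗[k] V →ₗ[k] V ⊗[k] V :=
  (TensorProduct.comm k V V).toLinearMap

variable {k V}

/-- `R¹² = R ⊗ I` as an endomorphism of `V ⊗ V ⊗ V`. -/
noncomputable def map12 (R : V ⊗[k] V →ₗ[k] V ⊗[k] V) :
    V ⊗[k] (V ⊗[k] V) →ₗ[k] V ⊗[k] (V ⊗[k] V) :=
  (TensorProduct.assoc k V V V).toLinearMap ∘ₗ R.rTensor V ∘ₗ
    (TensorProduct.assoc k V V V).symm.toLinearMap

/-- `R²³ = I ⊗ R` as an endomorphism of `V ⊗ V ⊗ V`. -/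
noncomputable def map23 (R : V ⊗[k] V →ₗ[k] V ⊗[k] V) :
    V ⊗[k] (V ⊗[k] V) →ₗ[k] V ⊗[k] (V ⊗[k] V) :=
  R.lTensor V

/-- `R¹³ = (I ⊗ τ)(R ⊗ I)(I ⊗ τ)` as an endomorphism of `V ⊗ V ⊗ V`. -/
noncomputable def map13 (R : V ⊗[k] V →ₗ[k] V ⊗[k] V) :
    V ⊗[k] (V ⊗[k] V) →ₗ[k] V ⊗[k] (V ⊗[k] V) :=
  (flipMap k V).lTensor V ∘ₗ map12 R ∘ₗ (flipMap k V).lTensor V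

/-- `R` is a solution of the Hopf equation: `R¹²R²³ = R²³R¹³R¹²`. -/
def IsHopfSolution (R : V ⊗[k] V →ₗ[k] V ⊗[k] V) : Prop :=
  map12 R ∘ₗ map23 R = map23 R ∘ₗ map13 R ∘ₗ map12 R

/-- `R` is a solution of the pentagonal equation: `R¹²R¹³R²³ = R²³R¹²`. -/
def IsPentagonSolution (R : V ⊗[k] V →ₗ[k] V ⊗[k] V) : Prop :=
  map12 R ∘ₗ map13 R ∘ₗ map23 R = map23 R ∘ₗ map12 R

end HopfEq

section Aux

/-- Abstract monoid computation underlying the equivalence. -/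
theorem monoid_key_aux {M : Type*} [Monoid M] (a b p q : M)
    (hp : p*p = 1) (hq : q*q = 1) (hbr : p*q*p = q*p*q)
    (hb : b = p*q*a*q*p) :
    a*b = b*(q*a*q)*a ↔ b*q*(a*p)*(b*q) = (a*p)*(q*(a*p)*q)*q := by
  subst hb
  have hp1 : ∀ x : M, p*(p*x) = x := fun x => by rw [← mul_assoc, hp, one_mul]
  have hq1 : ∀ x : M, q*(q*x) = x := fun x => by rw [← mul_assoc, hq, one_mul]
  have hbr1 : ∀ x : M, q*(p*(q*x)) = p*(q*(p*x)) := fun x => by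
    rw [← mul_assoc, ← mul_assoc, ← hbr, mul_assoc, mul_assoc]
  have hbr2 : ∀ x : M, p*(q*(p*x)) = q*(p*(q*x)) := fun x => (hbr1 x).symm
  constructor
  · intro h
    calc (p*q*a*q*p)*q*(a*p)*((p*q*a*q*p)*q)
        = ((p*q*a*q*p)*(q*a*q)*a)*(q*(p*q)) := by
          simp only [mul_assoc, hp1, hq1, hp, hq, mul_one]
      _ = (a*(p*q*a*q*p))*(q*(p*q)) := by rw [← h]
      _ = (a*p)*(q*((a*p)*q)*q) := by
          simp only [mul_assoc, hp1, hq1, hbr1, hp, hq, mul_one]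
      _ = (a*p)*(q*(a*p)*q)*q := by simp only [mul_assoc]
  · intro h
    calc a*(p*q*a*q*p) = ((a*p)*(q*(a*p)*q)*q)*(q*(p*q)) := by
          simp only [mul_assoc, hp1, hq1, hbr2, hp, hq, mul_one]
      _ = ((p*q*a*q*p)*q*(a*p)*((p*q*a*q*p)*q))*(q*(p*q)) := by rw [h]
      _ = (p*q*a*q*p)*(q*a*q)*a := by
          simp only [mul_assoc, hp1, hq1, hp, hq, mul_one]

variable {k V : Type*} [Field k] [AddCommGroup V] [Module k V]
variable (R S : V ⊗[k] V →ₗ[k] V ⊗[k] V)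

lemma map12_comp' : map12 (R ∘ₗ S) = map12 R ∘ₗ map12 S := by
  ext x y z
  simp [map12, rTensor_tmul]

lemma map23_comp' : map23 (R ∘ₗ S) = map23 R ∘ₗ map23 S := by
  simp [map23, lTensor_comp]

lemma flip12_sq : map12 (flipMap k V) ∘ₗ map12 (flipMap k V) = LinearMap.id := by
  ext x y z; simp [map12, flipMap]

lemma flip23_sq : map23 (flipMap k V) ∘ₗ map23 (flipMap k V) = LinearMap.id := by
  ext x y z; simp [map23, flipMap]

lemma flip_braid : map12 (flipMap k V) ∘ₗ map23 (flipMap k V) ∘ₗ map12 (flipMap k V)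
    = map23 (flipMap k V) ∘ₗ map12 (flipMap k V) ∘ₗ map23 (flipMap k V) := by
  ext x y z; simp [map12, map23, flipMap]

lemma sigma_eq : (map12 (flipMap k V) ∘ₗ map23 (flipMap k V)) ∘ₗ
      (TensorProduct.assoc k V V V).toLinearMap
    = (TensorProduct.comm k (V ⊗[k] V) V).toLinearMap := by
  ext x y z; simp [map12, map23, flipMap]

lemma comm_natural : (TensorProduct.comm k (V ⊗[k] V) V).toLinearMap ∘ₗ R.rTensor V
    = R.lTensor V ∘ₗ (TensorProduct.comm k (V ⊗[k] V) V).toLinearMap := by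
  ext x y z; simp

lemma commA : (map12 (flipMap k V) ∘ₗ map23 (flipMap k V)) ∘ₗ map12 R
    = map23 R ∘ₗ (map12 (flipMap k V) ∘ₗ map23 (flipMap k V)) := by
  have h1 := sigma_eq (k := k) (V := V)
  have h2 : (map12 (flipMap k V) ∘ₗ map23 (flipMap k V)) ∘ₗ map12 R
      = ((map12 (flipMap k V) ∘ₗ map23 (flipMap k V)) ∘ₗ (TensorProduct.assoc k V V V).toLinearMap)
        ∘ₗ R.rTensor V ∘ₗ (TensorProduct.assoc k V V V).symm.toLinearMap := by
    simp only [map12, comp_assoc]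
  rw [h2, h1, ← comp_assoc, comm_natural, comp_assoc, ← h1]
  simp only [map23, comp_assoc]
  congr 1
  ext x y z
  simp [map12, map23, flipMap]

end Aux

/-- `R` satisfies the Hopf equation iff `T := R∘τ` satisfies
`T²³T¹²T²³ = T¹²T¹³τ²³`. -/
theorem hopf_iff_comp_flip_eq (k V : Type*) [Field k] [AddCommGroup V] [Module k V]
    (R : V ⊗[k] V →ₗ[k] V ⊗[k] V) :
    IsHopfSolution R ↔
      map23 (R ∘ₗ flipMap k V) ∘ₗ map12 (R ∘ₗ flipMap k V) ∘ₗ map23 (R ∘ₗ flipMap k V)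
        = map12 (R ∘ₗ flipMap k V) ∘ₗ map13 (R ∘ₗ flipMap k V) ∘ₗ map23 (flipMap k V) := by
  set p := map12 (flipMap k V) with hpdef
  set q := map23 (flipMap k V) with hqdef
  set a := map12 R with hadef
  set b := map23 R with hbdef
  have hlq : (flipMap k V).lTensor V = q := rfl
  have hmap13 : ∀ S : V ⊗[k] V →ₗ[k] V ⊗[k] V, map13 S = q ∘ₗ map12 S ∘ₗ q := by
    intro S; rfl
  have hHopf : IsHopfSolution R ↔ a ∘ₗ b = b ∘ₗ (q ∘ₗ a ∘ₗ q) ∘ₗ a := by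
    unfold IsHopfSolution
    rw [hmap13 R, ← hadef, ← hbdef]
  rw [hHopf, map23_comp', map12_comp', hmap13, map12_comp',
    ← hadef, ← hbdef, ← hpdef, ← hqdef]
  -- pass to the multiplicative monoid of endomorphisms
  have hp : p * p = 1 := flip12_sq
  have hq : q * q = 1 := flip23_sq
  have hbr : p * q * p = q * p * q := by
    have := flip_braid (k := k) (V := V)
    simpa [mul_assoc, Module.End.mul_eq_comp, comp_assoc] using this
  have hA : p * q * a = b * (p * q) := by
    have := commA R
    simpa [mul_assoc, Module.End.mul_eq_comp] using this
  have hb : b = p * q * a * q * p := by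
    have hcanc : b * (p * q) * (q * p) = b := by
      simp only [mul_assoc]
      rw [show q * (q * p) = p by rw [← mul_assoc, hq, one_mul],
        show p * p = 1 from hp, mul_one]
    calc b = b * (p * q) * (q * p) := hcanc.symm
      _ = (p * q * a) * (q * p) := by rw [hA]
      _ = p * q * a * q * p := by rw [← mul_assoc]
  have key := monoid_key_aux a b p q hp hq hbr hb
  simp only [Module.End.mul_eq_comp] at key
  constructor
  · intro h
    have h' := key.mp (by simpa [comp_assoc] using h)
    simpa [comp_assoc] using h'
  · intro h
    have h' := key.mpr (by simpa [comp_assoc] using h)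
    simpa [comp_assoc] using h'
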